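/- Let G be a (P_5, gem)-free graph in the class H*: V(G) is partitioned into nonempty sets A_1,…,A_7 where A_1,…,A_5 are cliques arranged in a 5-cycle pattern (A_i complete to A_{i+1} mod 5 and anticomplete to A_{i+2}, A_{i+3} mod 5 for i=1,…,5), A_6 is complete to A_1 ∪ A_3 ∪ A_4 and anticomplete to A_2 ∪ A_5, every component of G[A_7] is a clique and a module of G, every vertex of A_7 has a neighbour in A_6, and A_7 is anticomplete to A_1 ∪ … ∪ A_5. Then every vertex subset S of G inducing a 5-cycle satisfies S ⊆ A_1 ∪ A_2 ∪ A_3 ∪ A_4 ∪ A_5 or S ⊆ A_6 ∪ A_7. -/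

import Mathlib

open SimpleGraph

/-- A graph is `k`-vertex-critical if its chromatic number is `k` and deleting
any vertex lowers the chromatic number. -/
def IsKVertexCritical {V : Type*} (G : SimpleGraph V) (k : ℕ) : Prop :=
  G.chromaticNumber = (k : ℕ∞) ∧
    ∀ v : V, (G.induce {u | u ≠ v}).chromaticNumber < (k : ℕ∞)

/-- The clique number of a graph. -/
noncomputable def cliqueNum' {V : Type*} (G : SimpleGraph V) : ℕ :=
  sSup {n | ∃ s : Finset V, G.IsNClique n s}

/-- `G` has no induced subgraph isomorphic to `H`. -/
def IndFree {W V : Type*} (H : SimpleGraph W) (G : SimpleGraph V) : Prop :=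
  ¬ ∃ s : Set V, Nonempty (H ≃g G.induce s)

def CompleteTo {V : Type*} (G : SimpleGraph V) (S T : Set V) : Prop :=
  ∀ s ∈ S, ∀ t ∈ T, G.Adj s t

def AnticompleteTo {V : Type*} (G : SimpleGraph V) (S T : Set V) : Prop :=
  ∀ s ∈ S, ∀ t ∈ T, ¬ G.Adj s t

/-- `M` is a module of `G`: each outside vertex is complete or anticomplete to `M`. -/
def IsModule {V : Type*} (G : SimpleGraph V) (M : Set V) : Prop :=
  ∀ v ∉ M, (∀ m ∈ M, G.Adj v m) ∨ (∀ m ∈ M, ¬ G.Adj v m)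

/-- A non-trivial module: a module `M` with `2 ≤ |M| < |V(G)|`. -/
def IsNontrivialModule {V : Type*} (G : SimpleGraph V) (M : Set V) : Prop :=
  IsModule G M ∧ 2 ≤ M.ncard ∧ M.ncard < Nat.card V

/-- `G` is an expansion of `H` with parts `Q w`: parts are nonempty, partition `V(G)`,
are completely joined along edges of `H` and anticomplete along non-edges. -/
def IsExpansion {V W : Type*} (G : SimpleGraph V) (H : SimpleGraph W) (Q : W → Set V) : Prop :=
  (∀ w, (Q w).Nonempty) ∧
  (Pairwise fun w w' => Disjoint (Q w) (Q w')) ∧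
  (∀ v, ∃ w, v ∈ Q w) ∧
  (∀ w w', H.Adj w w' → CompleteTo G (Q w) (Q w')) ∧
  (∀ w w', w ≠ w' → ¬ H.Adj w w' → AnticompleteTo G (Q w) (Q w'))

/-- The path on four vertices. -/
def P4 : SimpleGraph (Fin 4) := SimpleGraph.pathGraph 4

/-- The path on five vertices. -/
def P5 : SimpleGraph (Fin 5) := SimpleGraph.pathGraph 5

/-- The gem: a `P₄` (0-1-2-3) plus a dominating vertex 4. -/
def gem : SimpleGraph (Fin 5) :=
  SimpleGraph.fromRel (fun a b =>
    (a, b) ∈ [((0 : Fin 5), (1 : Fin 5)), (1, 2), (2, 3), (4, 0), (4, 1), (4, 2), (4, 3)])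

/-- The five-cycle. -/
def cycle5 : SimpleGraph (Fin 5) :=
  SimpleGraph.fromRel (fun a b =>
    (a, b) ∈ [((0 : Fin 5), (1 : Fin 5)), (1, 2), (2, 3), (3, 4), (4, 0)])

/-- The partition conditions defining the class `H*` of (P₅, gem)-free graphs:
`A₁,…,A₅` are nonempty cliques in a `C₅` pattern, `A₆` is complete to `A₁ ∪ A₃ ∪ A₄`
and anticomplete to `A₂ ∪ A₅`, every component of `G[A₇]` is a clique and a module of
`G`, every vertex of `A₇` has a neighbour in `A₆`, and `A₇` is anticomplete to
`A₁ ∪ ⋯ ∪ A₅`. -/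
structure HStarPart {V : Type*} (G : SimpleGraph V)
    (A1 A2 A3 A4 A5 A6 A7 : Set V) : Prop where
  ne1 : A1.Nonempty
  ne2 : A2.Nonempty
  ne3 : A3.Nonempty
  ne4 : A4.Nonempty
  ne5 : A5.Nonempty
  ne6 : A6.Nonempty
  ne7 : A7.Nonempty
  pdisj : List.Pairwise Disjoint [A1, A2, A3, A4, A5, A6, A7]
  cover : A1 ∪ A2 ∪ A3 ∪ A4 ∪ A5 ∪ A6 ∪ A7 = Set.univ
  cl1 : G.IsClique A1
  cl2 : G.IsClique A2
  cl3 : G.IsClique A3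
  cl4 : G.IsClique A4
  cl5 : G.IsClique A5
  c12 : CompleteTo G A1 A2
  c23 : CompleteTo G A2 A3
  c34 : CompleteTo G A3 A4
  c45 : CompleteTo G A4 A5
  c51 : CompleteTo G A5 A1
  a13 : AnticompleteTo G A1 A3
  a14 : AnticompleteTo G A1 A4
  a24 : AnticompleteTo G A2 A4
  a25 : AnticompleteTo G A2 A5
  a35 : AnticompleteTo G A3 A5
  c61 : CompleteTo G A6 A1
  c63 : CompleteTo G A6 A3
  c64 : CompleteTo G A6 A4
  a62 : AnticompleteTo G A6 A2
  a65 : AnticompleteTo G A6 A5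
  a71 : AnticompleteTo G A7 A1
  a72 : AnticompleteTo G A7 A2
  a73 : AnticompleteTo G A7 A3
  a74 : AnticompleteTo G A7 A4
  a75 : AnticompleteTo G A7 A5
  /-- every component of `G[A₇]` is a clique -/
  comp_clique : ∀ x y : A7, (G.induce A7).Reachable x y → x = y ∨ G.Adj x.1 y.1
  /-- every component of `G[A₇]` is a module of `G` -/
  comp_module : ∀ x y : A7, (G.induce A7).Reachable x y →
    ∀ z : V, (¬ ∃ hz : z ∈ A7, (G.induce A7).Reachable x ⟨z, hz⟩) →
      (G.Adj z x.1 ↔ G.Adj z y.1)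
  a7nbr : ∀ x ∈ A7, ∃ y ∈ A6, G.Adj x y


lemma exists_step (P : Fin 5 → Prop) (hi : ∃ i, P i) (hj : ∃ j, ¬ P j) :
    ∃ k, P k ∧ ¬ P (k + 1) := by
  by_contra h
  push_neg at h
  obtain ⟨i, hi⟩ := hi
  obtain ⟨j, hj⟩ := hj
  have s0 : P 0 → P 1 := fun hp => h 0 hp
  have s1 : P 1 → P 2 := fun hp => h 1 hp
  have s2 : P 2 → P 3 := fun hp => h 2 hp
  have s3 : P 3 → P 4 := fun hp => h 3 hp
  have s4 : P 4 → P 0 := fun hp => h 4 hp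
  fin_cases i <;> fin_cases j <;> tauto

lemma P5_free_contra {V : Type*} (G : SimpleGraph V) (hf : IndFree P5 G)
    (a b c d e : V)
    (hab : G.Adj a b) (hbc : G.Adj b c) (hcd : G.Adj c d) (hde : G.Adj d e)
    (hac : ¬ G.Adj a c) (had : ¬ G.Adj a d) (hae : ¬ G.Adj a e)
    (hbd : ¬ G.Adj b d) (hbe : ¬ G.Adj b e) (hce : ¬ G.Adj c e) : False := by
  have nab : a ≠ b := hab.ne
  have nbc : b ≠ c := hbc.ne
  have ncd : c ≠ d := hcd.ne
  have nde : d ≠ e := hde.ne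
  have nac : a ≠ c := by rintro rfl; exact had hcd
  have nad : a ≠ d := by rintro rfl; exact hac hcd.symm
  have nae : a ≠ e := by rintro rfl; exact had hde.symm
  have nbd : b ≠ d := by rintro rfl; exact hbe hde
  have nbe : b ≠ e := by rintro rfl; exact hbd hde.symm
  have nce : c ≠ e := by rintro rfl; exact hbe hbc
  set w : Fin 5 → V := ![a, b, c, d, e] with hw
  have hinj : Function.Injective w := by
    intro i j hij
    fin_cases i <;> fin_cases j <;> simp_all [w]
  apply hf
  refine ⟨Set.range w, ⟨⟨Equiv.ofInjective w hinj, ?_⟩⟩⟩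
  intro i j
  show (G.induce (Set.range w)).Adj _ _ ↔ P5.Adj i j
  have key : ∀ i j : Fin 5, G.Adj (w i) (w j) ↔ P5.Adj i j := by
    intro i j
    fin_cases i <;> fin_cases j <;>
      simp [w, P5, SimpleGraph.pathGraph_adj,
        show ((3:Fin 5):ℕ) = 3 from rfl, show ((4:Fin 5):ℕ) = 4 from rfl] <;>
      first
        | exact hab | exact hab.symm | exact hbc | exact hbc.symm
        | exact hcd | exact hcd.symm | exact hde | exact hde.symm
        | exact hac | exact had | exact hae | exact hbd | exact hbe | exact hce
        | exact fun h => hac h.symm | exact fun h => had h.symm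
        | exact fun h => hae h.symm | exact fun h => hbd h.symm
        | exact fun h => hbe h.symm | exact fun h => hce h.symm
  simpa [Equiv.ofInjective] using key i j

/-- in a (P₅, gem)-free graph of the class `H*`, every induced
five-cycle lies inside `A₁ ∪ ⋯ ∪ A₅` or inside `A₆ ∪ A₇`. -/
theorem C5_location_in_HStar {V : Type*} (G : SimpleGraph V)
    (A1 A2 A3 A4 A5 A6 A7 : Set V) (hH : HStarPart G A1 A2 A3 A4 A5 A6 A7)
    (hP5 : IndFree P5 G) (hgem : IndFree gem G)
    (S : Set V) (hS : Nonempty (cycle5 ≃g G.induce S)) :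
    S ⊆ A1 ∪ A2 ∪ A3 ∪ A4 ∪ A5 ∨ S ⊆ A6 ∪ A7 := by
  obtain ⟨f⟩ := hS
  by_contra hcon
  push_neg at hcon
  obtain ⟨h1, h2⟩ := hcon
  rw [Set.not_subset] at h1 h2
  obtain ⟨t, htS, ht⟩ := h1
  obtain ⟨u, huS, hu⟩ := h2
  set v : Fin 5 → V := fun i => ((f i : S) : V) with hv
  have hGadj : ∀ i j, G.Adj (v i) (v j) ↔ cycle5.Adj i j := by
    intro i j
    simpa using (f.map_adj_iff : (G.induce S).Adj (f i) (f j) ↔ cycle5.Adj i j)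
  have hvinj : Function.Injective v := fun i j h => f.toEquiv.injective (Subtype.ext h)
  have hsur : ∀ s, s ∈ S → ∃ i, v i = s := fun s hs => ⟨f.symm ⟨s, hs⟩, by simp [hv]⟩
  have hcase : ∀ w : V, w ∈ A1 ∨ w ∈ A2 ∨ w ∈ A3 ∨ w ∈ A4 ∨ w ∈ A5 ∨ w ∈ A6 ∨ w ∈ A7 := by
    intro w
    have hw : w ∈ A1 ∪ A2 ∪ A3 ∪ A4 ∪ A5 ∪ A6 ∪ A7 := hH.cover ▸ Set.mem_univ w
    simp only [Set.mem_union] at hw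
    tauto
  have pd := hH.pdisj
  simp only [List.pairwise_cons, List.mem_cons, List.mem_singleton, List.not_mem_nil,
    forall_eq_or_imp, forall_eq, List.Pairwise.nil, and_true, IsEmpty.forall_iff,
    implies_true] at pd
  obtain ⟨⟨d12, d13, d14, d15, d16, d17⟩, ⟨d23, d24, d25, d26, d27⟩,
    ⟨d34, d35, d36, d37⟩, ⟨d45, d46, d47⟩, ⟨d56, d57⟩, d67⟩ := pd
  have hdisj : ∀ w : V, (w ∈ A1 ∨ w ∈ A2 ∨ w ∈ A3 ∨ w ∈ A4 ∨ w ∈ A5) → w ∉ A6 ∪ A7 := by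
    rintro w (h | h | h | h | h) (h' | h')
    exacts [d16.ne_of_mem h h' rfl, d17.ne_of_mem h h' rfl, d26.ne_of_mem h h' rfl,
      d27.ne_of_mem h h' rfl, d36.ne_of_mem h h' rfl, d37.ne_of_mem h h' rfl,
      d46.ne_of_mem h h' rfl, d47.ne_of_mem h h' rfl, d56.ne_of_mem h h' rfl,
      d57.ne_of_mem h h' rfl]
  have ht67 : t ∈ A6 ∪ A7 := by
    rcases hcase t with h | h | h | h | h | h | h
    · exact absurd (by simp [Set.mem_union, h]) ht
    · exact absurd (by simp [Set.mem_union, h]) ht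
    · exact absurd (by simp [Set.mem_union, h]) ht
    · exact absurd (by simp [Set.mem_union, h]) ht
    · exact absurd (by simp [Set.mem_union, h]) ht
    · exact Or.inl h
    · exact Or.inr h
  obtain ⟨it, hit⟩ := hsur t htS
  obtain ⟨iu, hiu⟩ := hsur u huS
  have ht67' : v it ∈ A6 ∪ A7 := by rw [hit]; exact ht67
  have hu' : ¬ v iu ∈ A6 ∪ A7 := by rw [hiu]; exact hu
  obtain ⟨k, hPk, hPk1⟩ := exists_step (fun m => v m ∈ A6 ∪ A7) ⟨it, ht67'⟩ ⟨iu, hu'⟩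
  -- index arithmetic in Fin 5
  have i1 : k + 1 + 1 = k + 2 := by rw [add_assoc]; rfl
  have i2 : k + 2 + 1 = k + 3 := by rw [add_assoc]; rfl
  have i3 : k + 3 + 1 = k + 4 := by rw [add_assoc]; rfl
  have i4 : k + 4 + 1 = k := by rw [add_assoc, show (4:Fin 5) + 1 = 0 from rfl, add_zero]
  have j1 : k + 1 + 2 = k + 3 := by rw [add_assoc]; rfl
  have j2 : k + 2 + 2 = k + 4 := by rw [add_assoc]; rfl
  have j3 : k + 1 + 3 = k + 4 := by rw [add_assoc]; rfl
  have cadj : ∀ m : Fin 5, cycle5.Adj m (m + 1) := by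
    intro m; rw [cycle5, SimpleGraph.fromRel_adj]; revert m; decide
  have cnadj2 : ∀ m : Fin 5, ¬ cycle5.Adj m (m + 2) := by
    intro m; rw [cycle5, SimpleGraph.fromRel_adj]; revert m; decide
  have cnadj3 : ∀ m : Fin 5, ¬ cycle5.Adj m (m + 3) := by
    intro m; rw [cycle5, SimpleGraph.fromRel_adj]; revert m; decide
  set x := v k
  set y1 := v (k + 1) with hy1def
  set z1 := v (k + 2) with hz1def
  set z2 := v (k + 3) with hz2def
  set y2 := v (k + 4) with hy2def
  have e_xy1 : G.Adj x y1 := (hGadj k (k + 1)).mpr (cadj k)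
  have e_y1z1 : G.Adj y1 z1 := (hGadj (k + 1) (k + 2)).mpr (i1 ▸ cadj (k + 1))
  have e_z1z2 : G.Adj z1 z2 := (hGadj (k + 2) (k + 3)).mpr (i2 ▸ cadj (k + 2))
  have e_z2y2 : G.Adj z2 y2 := (hGadj (k + 3) (k + 4)).mpr (i3 ▸ cadj (k + 3))
  have e_y2x : G.Adj y2 x := by
    have hc := cadj (k + 4)
    rw [i4] at hc
    exact (hGadj (k + 4) k).mpr hc
  have n_xz1 : ¬ G.Adj x z1 := fun h => cnadj2 k ((hGadj k (k + 2)).mp h)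
  have n_xz2 : ¬ G.Adj x z2 := fun h => cnadj3 k ((hGadj k (k + 3)).mp h)
  have n_y1z2 : ¬ G.Adj y1 z2 := fun h => cnadj2 (k + 1) (j1 ▸ (hGadj (k + 1) (k + 3)).mp h)
  have n_y1y2 : ¬ G.Adj y1 y2 := fun h => cnadj3 (k + 1) (j3 ▸ (hGadj (k + 1) (k + 4)).mp h)
  have n_z1y2 : ¬ G.Adj z1 y2 := fun h => cnadj2 (k + 2) (j2 ▸ (hGadj (k + 2) (k + 4)).mp h)
  have ne_y1y2 : y1 ≠ y2 := by
    intro hh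
    have h14 : (1 : Fin 5) = 4 := add_left_cancel (hvinj hh)
    exact absurd h14 (by decide)
  have ne_z1y2 : z1 ≠ y2 := by
    intro hh
    have h24 : (2 : Fin 5) = 4 := add_left_cancel (hvinj hh)
    exact absurd h24 (by decide)
  have hy1m : y1 ∈ A1 ∨ y1 ∈ A2 ∨ y1 ∈ A3 ∨ y1 ∈ A4 ∨ y1 ∈ A5 := by
    rcases hcase y1 with h | h | h | h | h | h | h
    · tauto
    · tauto
    · tauto
    · tauto
    · tauto
    · exact absurd (Or.inl h : y1 ∈ A6 ∪ A7) hPk1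
    · exact absurd (Or.inr h : y1 ∈ A6 ∪ A7) hPk1
  rcases hPk with hx6 | hx7
  swap
  · -- x ∈ A7 : impossible since x is adjacent to y1 ∈ A1 ∪ ... ∪ A5
    rcases hy1m with h | h | h | h | h
    · exact hH.a71 x hx7 y1 h e_xy1
    · exact hH.a72 x hx7 y1 h e_xy1
    · exact hH.a73 x hx7 y1 h e_xy1
    · exact hH.a74 x hx7 y1 h e_xy1
    · exact hH.a75 x hx7 y1 h e_xy1
  -- x ∈ A6
  have clean : ∀ aa : V, G.Adj aa y1 → (∀ w, w ∈ A6 → ¬ G.Adj aa w) →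
      (∀ w, w ∈ A7 → ¬ G.Adj aa w) → z1 ∈ A6 → False := by
    intro aa haay1 ha6 ha7 hz16
    have hz2m : z2 ∈ A6 ∨ z2 ∈ A7 := by
      rcases hcase z2 with h | h | h | h | h | h | h
      · exact absurd (hH.c61 x hx6 z2 h) n_xz2
      · exact absurd e_z1z2 (hH.a62 z1 hz16 z2 h)
      · exact absurd (hH.c63 x hx6 z2 h) n_xz2
      · exact absurd (hH.c64 x hx6 z2 h) n_xz2
      · exact absurd e_z1z2 (hH.a65 z1 hz16 z2 h)
      · exact Or.inl h
      · exact Or.inr h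
    have hy2m : y2 ∈ A6 ∨ y2 ∈ A7 := by
      rcases hcase y2 with h | h | h | h | h | h | h
      · exact absurd (hH.c61 z1 hz16 y2 h) n_z1y2
      · exact absurd e_y2x.symm (hH.a62 x hx6 y2 h)
      · exact absurd (hH.c63 z1 hz16 y2 h) n_z1y2
      · exact absurd (hH.c64 z1 hz16 y2 h) n_z1y2
      · exact absurd e_y2x.symm (hH.a65 x hx6 y2 h)
      · exact Or.inl h
      · exact Or.inr h
    refine P5_free_contra G hP5 aa y1 z1 z2 y2 haay1 e_y1z1 e_z1z2 e_z2y2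
      (ha6 z1 hz16) ?_ ?_ n_y1z2 n_y1y2 n_z1y2
    · rcases hz2m with h | h
      · exact ha6 z2 h
      · exact ha7 z2 h
    · rcases hy2m with h | h
      · exact ha6 y2 h
      · exact ha7 y2 h
  rcases hy1m with hy | hy | hy | hy | hy
  · -- y1 ∈ A1
    obtain ⟨a, ha2⟩ := hH.ne2
    rcases hcase z1 with hz1 | hz1 | hz1 | hz1 | hz1 | hz1 | hz1
    · exact absurd (hH.c61 x hx6 z1 hz1) n_xz1
    · -- z1 ∈ A2
      rcases hcase z2 with hz2 | hz2 | hz2 | hz2 | hz2 | hz2 | hz2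
      · exact absurd (hH.c61 x hx6 z2 hz2) n_xz2
      · -- z2 ∈ A2
        rcases hcase y2 with hy2 | hy2 | hy2 | hy2 | hy2 | hy2 | hy2
        · exact n_y1y2 (hH.cl1 hy hy2 ne_y1y2)
        · exact hH.a62 x hx6 y2 hy2 e_y2x.symm
        · exact n_z1y2 (hH.c23 z1 hz1 y2 hy2)
        · exact hH.a24 z2 hz2 y2 hy2 e_z2y2
        · exact hH.a65 x hx6 y2 hy2 e_y2x.symm
        · exact hH.a62 y2 hy2 z2 hz2 e_z2y2.symm
        · exact hH.a72 y2 hy2 z2 hz2 e_z2y2.symm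
      · exact absurd (hH.c63 x hx6 z2 hz2) n_xz2
      · exact hH.a24 z1 hz1 z2 hz2 e_z1z2
      · exact hH.a25 z1 hz1 z2 hz2 e_z1z2
      · exact hH.a62 z2 hz2 z1 hz1 e_z1z2.symm
      · exact hH.a72 z2 hz2 z1 hz1 e_z1z2.symm
    · exact absurd (hH.c63 x hx6 z1 hz1) n_xz1
    · exact absurd (hH.c64 x hx6 z1 hz1) n_xz1
    · -- z1 ∈ A5
      rcases hcase z2 with hz2 | hz2 | hz2 | hz2 | hz2 | hz2 | hz2
      · exact absurd (hH.c61 x hx6 z2 hz2) n_xz2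
      · exact hH.a25 z2 hz2 z1 hz1 e_z1z2.symm
      · exact absurd (hH.c63 x hx6 z2 hz2) n_xz2
      · exact absurd (hH.c64 x hx6 z2 hz2) n_xz2
      · -- z2 ∈ A5
        rcases hcase y2 with hy2 | hy2 | hy2 | hy2 | hy2 | hy2 | hy2
        · exact n_z1y2 (hH.c51 z1 hz1 y2 hy2)
        · exact hH.a25 y2 hy2 z2 hz2 e_z2y2.symm
        · exact hH.a35 y2 hy2 z2 hz2 e_z2y2.symm
        · exact n_z1y2 (hH.c45 y2 hy2 z1 hz1).symm
        · exact n_z1y2 (hH.cl5 hz1 hy2 ne_z1y2)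
        · exact hH.a65 y2 hy2 z2 hz2 e_z2y2.symm
        · exact hH.a75 y2 hy2 z2 hz2 e_z2y2.symm
      · exact hH.a65 z2 hz2 z1 hz1 e_z1z2.symm
      · exact hH.a75 z2 hz2 z1 hz1 e_z1z2.symm
    · -- z1 ∈ A6 : P5 via a ∈ A2
      exact clean a (hH.c12 y1 hy a ha2).symm
        (fun w hw e => hH.a62 w hw a ha2 e.symm)
        (fun w hw e => hH.a72 w hw a ha2 e.symm) hz1
    · exact hH.a71 z1 hz1 y1 hy e_y1z1.symm
  · -- y1 ∈ A2
    exact hH.a62 x hx6 y1 hy e_xy1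
  · -- y1 ∈ A3
    obtain ⟨a, ha2⟩ := hH.ne2
    rcases hcase z1 with hz1 | hz1 | hz1 | hz1 | hz1 | hz1 | hz1
    · exact absurd (hH.c61 x hx6 z1 hz1) n_xz1
    · -- z1 ∈ A2
      rcases hcase z2 with hz2 | hz2 | hz2 | hz2 | hz2 | hz2 | hz2
      · exact absurd (hH.c61 x hx6 z2 hz2) n_xz2
      · -- z2 ∈ A2
        rcases hcase y2 with hy2 | hy2 | hy2 | hy2 | hy2 | hy2 | hy2
        · exact n_z1y2 (hH.c12 y2 hy2 z1 hz1).symm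
        · exact hH.a62 x hx6 y2 hy2 e_y2x.symm
        · exact n_y1y2 (hH.cl3 hy hy2 ne_y1y2)
        · exact hH.a24 z2 hz2 y2 hy2 e_z2y2
        · exact hH.a65 x hx6 y2 hy2 e_y2x.symm
        · exact hH.a62 y2 hy2 z2 hz2 e_z2y2.symm
        · exact hH.a72 y2 hy2 z2 hz2 e_z2y2.symm
      · exact absurd (hH.c63 x hx6 z2 hz2) n_xz2
      · exact hH.a24 z1 hz1 z2 hz2 e_z1z2
      · exact hH.a25 z1 hz1 z2 hz2 e_z1z2
      · exact hH.a62 z2 hz2 z1 hz1 e_z1z2.symm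
      · exact hH.a72 z2 hz2 z1 hz1 e_z1z2.symm
    · exact absurd (hH.c63 x hx6 z1 hz1) n_xz1
    · exact absurd (hH.c64 x hx6 z1 hz1) n_xz1
    · exact hH.a35 y1 hy z1 hz1 e_y1z1
    · -- z1 ∈ A6 : P5 via a ∈ A2
      exact clean a (hH.c23 a ha2 y1 hy)
        (fun w hw e => hH.a62 w hw a ha2 e.symm)
        (fun w hw e => hH.a72 w hw a ha2 e.symm) hz1
    · exact hH.a73 z1 hz1 y1 hy e_y1z1.symm
  · -- y1 ∈ A4
    obtain ⟨a, ha5⟩ := hH.ne5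
    rcases hcase z1 with hz1 | hz1 | hz1 | hz1 | hz1 | hz1 | hz1
    · exact absurd (hH.c61 x hx6 z1 hz1) n_xz1
    · exact hH.a24 z1 hz1 y1 hy e_y1z1.symm
    · exact absurd (hH.c63 x hx6 z1 hz1) n_xz1
    · exact absurd (hH.c64 x hx6 z1 hz1) n_xz1
    · -- z1 ∈ A5
      rcases hcase z2 with hz2 | hz2 | hz2 | hz2 | hz2 | hz2 | hz2
      · exact absurd (hH.c61 x hx6 z2 hz2) n_xz2
      · exact hH.a25 z2 hz2 z1 hz1 e_z1z2.symm
      · exact absurd (hH.c63 x hx6 z2 hz2) n_xz2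
      · exact absurd (hH.c64 x hx6 z2 hz2) n_xz2
      · -- z2 ∈ A5
        rcases hcase y2 with hy2 | hy2 | hy2 | hy2 | hy2 | hy2 | hy2
        · exact n_z1y2 (hH.c51 z1 hz1 y2 hy2)
        · exact hH.a25 y2 hy2 z2 hz2 e_z2y2.symm
        · exact hH.a35 y2 hy2 z2 hz2 e_z2y2.symm
        · exact n_y1y2 (hH.cl4 hy hy2 ne_y1y2)
        · exact n_z1y2 (hH.cl5 hz1 hy2 ne_z1y2)
        · exact hH.a65 y2 hy2 z2 hz2 e_z2y2.symm
        · exact hH.a75 y2 hy2 z2 hz2 e_z2y2.symm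
      · exact hH.a65 z2 hz2 z1 hz1 e_z1z2.symm
      · exact hH.a75 z2 hz2 z1 hz1 e_z1z2.symm
    · -- z1 ∈ A6 : P5 via a ∈ A5
      exact clean a (hH.c45 y1 hy a ha5).symm
        (fun w hw e => hH.a65 w hw a ha5 e.symm)
        (fun w hw e => hH.a75 w hw a ha5 e.symm) hz1
    · exact hH.a74 z1 hz1 y1 hy e_y1z1.symm
  · -- y1 ∈ A5
    exact hH.a65 x hx6 y1 hy e_xy1
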